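/- Suppose $l_n: \Theta \to [0,\infty)$ are measurable with $l_n \le 1$, $\pi$ is a probability density on $\Theta \subseteq \mathbb{R}^d$, and there exist sets $A_n \subseteq B(\theta_o,\epsilon_n)$ with $\epsilon_n \to 0$ such that $l_n > 0$ on $A_n$, $\pi > 0$ on a neighborhood of $\theta_o$, $A_n$ has positive Lebesgue measure, and $l_n = 0$ outside $B(\theta_o, \epsilon)$ for all $n \ge n(\epsilon)$, for every $\epsilon > 0$. Then the normalized posteriors $\Pi_n(d\theta) \propto l_n(\theta)\pi(\theta)\,d\theta$ are well-defined for $n$ large and converge weakly to $\delta_{\theta_o}$. -/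

import Mathlib

open MeasureTheory Filter Topology

/-- deterministic skeleton of the consistency proof: on
`Θ = ℝᵈ` with Lebesgue measure, suppose `l n` are measurable likelihoods with
values in `[0, 1]`, `π` is a probability density positive in a neighbourhood
of `θ_o`, and there are sets `A n ⊆ B(θ_o, ε_n)` of positive Lebesgue measure
with `ε_n → 0` on which `l n > 0`, while for every `ε > 0` one has `l n = 0`
outside `B(θ_o, ε)` for all large `n`.  Then for `n` large the normalized
posterior is well defined (its normalizing constant is positive) and the
posteriors converge weakly to `δ_{θ_o}`: posterior expectations of bounded
continuous functions tend to the value at `θ_o`. -/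
theorem abc_el_deterministic_consistency_skeleton
    {d : ℕ} (θo : EuclideanSpace ℝ (Fin d))
    (l : ℕ → EuclideanSpace ℝ (Fin d) → ℝ)
    (π : EuclideanSpace ℝ (Fin d) → ℝ)
    (hl_meas : ∀ n, Measurable (l n))
    (hl_nonneg : ∀ n θ, 0 ≤ l n θ) (hl_le_one : ∀ n θ, l n θ ≤ 1)
    (hπ_meas : Measurable π) (hπ_nonneg : ∀ θ, 0 ≤ π θ)
    (hπ_int : Integrable π volume) (hπ_prob : ∫ θ, π θ = 1)
    (hπ_pos : ∃ U ∈ 𝓝 θo, ∀ θ ∈ U, 0 < π θ)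
    (A : ℕ → Set (EuclideanSpace ℝ (Fin d))) (ε' : ℕ → ℝ)
    (hε' : Tendsto ε' atTop (𝓝 0))
    (hA_sub : ∀ n, A n ⊆ Metric.ball θo (ε' n))
    (hA_pos : ∀ n, 0 < volume (A n))
    (hlA : ∀ n, ∀ θ ∈ A n, 0 < l n θ)
    (hl_zero : ∀ ε > (0 : ℝ), ∃ N, ∀ n ≥ N,
      ∀ θ ∉ Metric.ball θo ε, l n θ = 0) :
    (∃ N, ∀ n ≥ N, 0 < ∫ θ, l n θ * π θ) ∧
    ∀ s : BoundedContinuousFunction (EuclideanSpace ℝ (Fin d)) ℝ,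
      Tendsto (fun n => (∫ θ, s θ * (l n θ * π θ)) / ∫ θ, l n θ * π θ)
        atTop (𝓝 (s θo)) := by
  -- f n := l n * π
  set f : ℕ → EuclideanSpace ℝ (Fin d) → ℝ := fun n θ => l n θ * π θ with hf
  have hf_nonneg : ∀ n θ, 0 ≤ f n θ := fun n θ =>
    mul_nonneg (hl_nonneg n θ) (hπ_nonneg θ)
  have hf_int : ∀ n, Integrable (f n) volume := by
    intro n
    refine Integrable.mono hπ_int ((hl_meas n).mul hπ_meas).aestronglyMeasurable ?_
    filter_upwards with θ
    rw [Real.norm_eq_abs, Real.norm_eq_abs, abs_of_nonneg (hf_nonneg n θ),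
      abs_of_nonneg (hπ_nonneg θ)]
    calc l n θ * π θ ≤ 1 * π θ := by
          exact mul_le_mul_of_nonneg_right (hl_le_one n θ) (hπ_nonneg θ)
      _ = π θ := one_mul _
  -- neighbourhood where π > 0
  obtain ⟨U, hU, hUpos⟩ := hπ_pos
  obtain ⟨r, hr, hrU⟩ := Metric.mem_nhds_iff.mp hU
  -- eventually ε' n < r
  have hev : ∀ᶠ n in atTop, ε' n < r := hε'.eventually (eventually_lt_nhds hr)
  obtain ⟨N0, hN0⟩ := hev.exists_forall_of_atTop
  -- positivity of normalizing constants for n ≥ N0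
  have hpos : ∀ n ≥ N0, 0 < ∫ θ, f n θ := by
    intro n hn
    rcases lt_or_eq_of_le (integral_nonneg (f := f n) (hf_nonneg n)) with h | h
    · exact h
    exfalso
    have hzero : f n =ᵐ[volume] 0 :=
      (integral_eq_zero_iff_of_nonneg (hf_nonneg n) (hf_int n)).mp h.symm
    have hnull : volume {θ | f n θ ≠ 0} = 0 := by
      simpa [Filter.EventuallyEq, ae_iff] using hzero
    have hsub : A n ⊆ {θ | f n θ ≠ 0} := by
      intro θ hθ
      have hπθ : 0 < π θ := hUpos θ (hrU (Metric.ball_subset_ball (le_of_lt (hN0 n hn)) (hA_sub n hθ)))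
      exact ne_of_gt (mul_pos (hlA n θ hθ) hπθ)
    exact absurd (le_trans (measure_mono hsub) hnull.le) (not_le.mpr (hA_pos n))
  refine ⟨⟨N0, hpos⟩, ?_⟩
  intro s
  have hsf_int : ∀ n, Integrable (fun θ => s θ * f n θ) volume := by
    intro n
    refine Integrable.bdd_mul (hf_int n) s.continuous.aestronglyMeasurable (c := ‖s‖) (Eventually.of_forall fun θ => s.norm_coe_le_norm θ)
  rw [Metric.tendsto_atTop]
  intro ε hε
  have hε2 : 0 < ε / 2 := by linarith
  obtain ⟨δ, hδ, hδs⟩ := Metric.continuousAt_iff.mp (s.continuous.continuousAt (x := θo)) (ε / 2) hε2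
  obtain ⟨N1, hN1⟩ := hl_zero δ hδ
  refine ⟨max N0 N1, fun n hn => ?_⟩
  have hn0 : n ≥ N0 := le_trans (le_max_left _ _) hn
  have hn1 : n ≥ N1 := le_trans (le_max_right _ _) hn
  have hD : 0 < ∫ θ, f n θ := hpos n hn0
  set D := ∫ θ, f n θ with hDdef
  -- pointwise bound
  have hptw : ∀ θ, |(s θ - s θo) * f n θ| ≤ ε / 2 * f n θ := by
    intro θ
    by_cases hθ : θ ∈ Metric.ball θo δ
    · rw [abs_mul, abs_of_nonneg (hf_nonneg n θ)]
      refine mul_le_mul_of_nonneg_right ?_ (hf_nonneg n θ)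
      have := hδs (Metric.mem_ball.mp hθ)
      rw [Real.dist_eq] at this
      exact this.le
    · have : l n θ = 0 := hN1 n hn1 θ hθ
      simp [hf, this, mul_nonneg hε2.le (hf_nonneg n θ)]
  have hnum : |∫ θ, (s θ - s θo) * f n θ| ≤ ε / 2 * D := by
    calc |∫ θ, (s θ - s θo) * f n θ| ≤ ∫ θ, |(s θ - s θo) * f n θ| := by
          simpa [Real.norm_eq_abs, abs_mul] using
            norm_integral_le_integral_norm (μ := volume)
              (fun θ => (s θ - s θo) * f n θ)
      _ ≤ ∫ θ, ε / 2 * f n θ := by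
          have hI : Integrable (fun θ => |(s θ - s θo) * f n θ|) volume := by
            have := (((hsf_int n).sub ((hf_int n).const_mul (s θo)))).abs
            simpa [sub_mul] using this
          exact integral_mono hI ((hf_int n).const_mul (ε / 2)) hptw
      _ = ε / 2 * D := integral_const_mul _ _
  have hsplit : ∫ θ, (s θ - s θo) * f n θ = (∫ θ, s θ * f n θ) - s θo * D := by
    simp only [sub_mul]
    rw [integral_sub (hsf_int n) ((hf_int n).const_mul (s θo)), integral_const_mul]
  rw [Real.dist_eq]
  have hrw : (∫ θ, s θ * f n θ) / D - s θo = ((∫ θ, s θ * f n θ) - s θo * D) / D := by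
    field_simp
  rw [hrw, ← hsplit, abs_div, abs_of_pos hD]
  rw [div_lt_iff₀ hD]
  calc |∫ θ, (s θ - s θo) * f n θ| ≤ ε / 2 * D := hnum
    _ < ε * D := by nlinarith
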